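/- Let u₁ < u₂ be real numbers, and for z > 0 define τ₁(z) := 1/(3z⁶) + 2u₁/z² + 2u₁²·z² and τ₂(z) := 1/(3z⁶) + 2u₂/z² + 2u₂²·z². Then, as z → 0⁺, (τ₂(z) − τ₁(z))/(2(u₂ − u₁)) − (3τ₁(z))^{1/3} − (u₂ − u₁)/(3τ₁(z))^{1/3} − 2u₁u₂/(3τ₁(z)) = O(z¹⁰); equivalently, this difference is O(τ₁(z)^{−5/3}). (This is the time-calibration relation (τ₂−τ₁)/(2(t₂−t₁)) = (3τ₁)^{1/3} + (t₂−t₁)/(3τ₁)^{1/3} + 2t₁t₂/(3τ₁) + O(τ₁^{−5/3}) of Theorem 1.1.) -/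

import Mathlib

open Filter Set Asymptotics

set_option maxHeartbeats 1000000

private lemma aux_ev_bound (f : ℝ → ℝ) (hf : Continuous f) (b : ℝ) (hb : |f 0| < b) :
    ∀ᶠ z in nhdsWithin (0:ℝ) (Ioi 0), |f z| ≤ b := by
  have h2 := Metric.tendsto_nhds.mp (hf.tendsto 0) (b - |f 0|) (by linarith)
  apply Filter.Eventually.filter_mono nhdsWithin_le_nhds
  filter_upwards [h2] with z hz
  rw [Real.dist_eq] at hz
  have h3 := abs_sub_abs_le_abs_sub (f z) (f 0)
  linarith

/-- time-calibration relation
`(τ₂−τ₁)/(2(u₂−u₁)) = (3τ₁)^{1/3} + (u₂−u₁)/(3τ₁)^{1/3} + 2u₁u₂/(3τ₁) + O(z¹⁰)`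
as `z → 0⁺`, where `τᵢ(z) = 1/(3z⁶) + 2uᵢ/z² + 2uᵢ²z²`; equivalently the
difference is `O(τ₁^{−5/3})`. -/
theorem pearcey_time_calibration
    (u₁ u₂ : ℝ) (h : u₁ < u₂)
    (τ₁ τ₂ : ℝ → ℝ)
    (hτ₁ : ∀ z : ℝ, τ₁ z = 1 / (3 * z ^ 6) + 2 * u₁ / z ^ 2 + 2 * u₁ ^ 2 * z ^ 2)
    (hτ₂ : ∀ z : ℝ, τ₂ z = 1 / (3 * z ^ 6) + 2 * u₂ / z ^ 2 + 2 * u₂ ^ 2 * z ^ 2) :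
    (fun z : ℝ =>
        (τ₂ z - τ₁ z) / (2 * (u₂ - u₁)) - (3 * τ₁ z) ^ ((1 : ℝ) / 3)
          - (u₂ - u₁) / (3 * τ₁ z) ^ ((1 : ℝ) / 3) - 2 * u₁ * u₂ / (3 * τ₁ z))
      =O[nhdsWithin (0 : ℝ) (Ioi 0)] (fun z : ℝ => z ^ 10)
    ∧
    (fun z : ℝ =>
        (τ₂ z - τ₁ z) / (2 * (u₂ - u₁)) - (3 * τ₁ z) ^ ((1 : ℝ) / 3)
          - (u₂ - u₁) / (3 * τ₁ z) ^ ((1 : ℝ) / 3) - 2 * u₁ * u₂ / (3 * τ₁ z))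
      =O[nhdsWithin (0 : ℝ) (Ioi 0)] (fun z : ℝ => (τ₁ z) ^ (-(5 : ℝ) / 3)) := by
  have hq : (0:ℝ) < u₂ - u₁ := sub_pos.mpr h
  have hqne : u₂ - u₁ ≠ 0 := ne_of_gt hq
  set C₁ : ℝ := |16*u₁^3| + 1 with hC₁def
  clear_value C₁
  set C₂ : ℝ := |6*u₁^3 + 6*u₁^2*u₂| + 1 with hC₂def
  clear_value C₂
  have hC₁ : 1 ≤ C₁ := by rw [hC₁def]; have := abs_nonneg (16*u₁^3); linarith
  have hC₂ : 1 ≤ C₂ := by rw [hC₂def]; have := abs_nonneg (6*u₁^3 + 6*u₁^2*u₂); linarith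
  set C : ℝ := 2*(2*C₁+C₂) with hCdef
  clear_value C
  -- eventual facts
  have hev1 : ∀ᶠ z in nhdsWithin (0:ℝ) (Ioi 0), |6*u₁*z^4 + 6*u₁^2*z^8| ≤ 1/10 :=
    aux_ev_bound (fun z => 6*u₁*z^4 + 6*u₁^2*z^8) (by fun_prop) (1/10) (by norm_num)
  have hev2 : ∀ᶠ z in nhdsWithin (0:ℝ) (Ioi 0), |2*u₁*z^4 - 2*u₁^2*z^8| ≤ 1/10 :=
    aux_ev_bound (fun z => 2*u₁*z^4 - 2*u₁^2*z^8) (by fun_prop) (1/10) (by norm_num)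
  have hev3 : ∀ᶠ z in nhdsWithin (0:ℝ) (Ioi 0),
      |16*u₁^3 + 12*u₁^4*z^4 - 24*u₁^5*z^8 + 8*u₁^6*z^12| ≤ C₁ :=
    aux_ev_bound (fun z => 16*u₁^3 + 12*u₁^4*z^4 - 24*u₁^5*z^8 + 8*u₁^6*z^12) (by fun_prop)
      C₁ (by rw [hC₁def]; norm_num)
  have hev4 : ∀ᶠ z in nhdsWithin (0:ℝ) (Ioi 0),
      |6*u₁^3 + 6*u₁^2*u₂ + (4*u₁^4 + 8*u₁^3*u₂)*z^4 + (4*u₁^5 - 4*u₁^4*u₂)*z^8| ≤ C₂ :=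
    aux_ev_bound (fun z => 6*u₁^3 + 6*u₁^2*u₂ + (4*u₁^4 + 8*u₁^3*u₂)*z^4
      + (4*u₁^5 - 4*u₁^4*u₂)*z^8) (by fun_prop) C₂ (by rw [hC₂def]; norm_num)
  have hev5 : ∀ᶠ z in nhdsWithin (0:ℝ) (Ioi 0), |(u₂-u₁)*z^4| ≤ 1 :=
    aux_ev_bound (fun z => (u₂-u₁)*z^4) (by fun_prop) 1 (by norm_num)
  have hmem : ∀ᶠ z in nhdsWithin (0:ℝ) (Ioi 0), z ∈ Ioi (0:ℝ) := eventually_mem_nhdsWithin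
  -- main estimate
  have first :
      (fun z : ℝ =>
        (τ₂ z - τ₁ z) / (2 * (u₂ - u₁)) - (3 * τ₁ z) ^ ((1 : ℝ) / 3)
          - (u₂ - u₁) / (3 * τ₁ z) ^ ((1 : ℝ) / 3) - 2 * u₁ * u₂ / (3 * τ₁ z))
      =O[nhdsWithin (0 : ℝ) (Ioi 0)] (fun z : ℝ => z ^ 10) := by
    rw [isBigO_iff]
    refine ⟨C, ?_⟩
    filter_upwards [hmem, hev1, hev2, hev3, hev4, hev5] with z hz h1 h2 h3 h4 h5
    have hzpos : (0:ℝ) < z := hz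
    have hz2 : (0:ℝ) < z^2 := by positivity
    have hz6 : (0:ℝ) < z^6 := by positivity
    obtain ⟨h1a, h1b⟩ := abs_le.mp h1
    obtain ⟨h2a, h2b⟩ := abs_le.mp h2
    have hwlb : (9:ℝ)/10 ≤ 1 + (6*u₁*z^4 + 6*u₁^2*z^8) := by linarith
    have hwub : 1 + (6*u₁*z^4 + 6*u₁^2*z^8) ≤ 11/10 := by linarith
    have hτeq : 3 * τ₁ z = (1 + (6*u₁*z^4 + 6*u₁^2*z^8)) / z^6 := by
      rw [hτ₁]; field_simp; ring
    have hτpos : 0 < 3 * τ₁ z := by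
      rw [hτeq]; exact div_pos (by linarith) hz6
    simp only [Real.norm_eq_abs]
    set c := (3 * τ₁ z) ^ ((1:ℝ)/3) with hcdef
    clear_value c
    have hcpos : 0 < c := by rw [hcdef]; exact Real.rpow_pos_of_pos hτpos _
    have hc3 : c ^ 3 = 3 * τ₁ z := by
      rw [hcdef, ← Real.rpow_natCast ((3*τ₁ z) ^ ((1:ℝ)/3)) 3, ← Real.rpow_mul hτpos.le]
      norm_num
    set r := z^2 * c with hrdef
    clear_value r
    have hrpos : 0 < r := by rw [hrdef]; positivity
    have hr3 : r ^ 3 = 1 + (6*u₁*z^4 + 6*u₁^2*z^8) := by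
      have hh : r ^ 3 = z^6 * c^3 := by rw [hrdef]; ring
      rw [hh, hc3, hτeq]
      field_simp
    have hr3lb : (9:ℝ)/10 ≤ r^3 := by rw [hr3]; exact hwlb
    have hr3ub : r^3 ≤ 11/10 := by rw [hr3]; exact hwub
    have hrub : r ≤ 11/10 := by
      by_contra hcon
      push_neg at hcon
      have h31 : ((11:ℝ)/10)^3 ≤ r^3 := pow_le_pow_left₀ (by norm_num) hcon.le 3
      norm_num at h31
      linarith
    have hrlb : (9:ℝ)/10 ≤ r := by
      by_contra hcon
      push_neg at hcon
      have h31 : r^3 ≤ ((9:ℝ)/10)^3 := pow_le_pow_left₀ hrpos.le hcon.le 3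
      norm_num at h31
      linarith
    have halb : (9:ℝ)/10 ≤ 1 + 2*u₁*z^4 - 2*u₁^2*z^8 := by linarith
    have haub : 1 + 2*u₁*z^4 - 2*u₁^2*z^8 ≤ 11/10 := by linarith
    set a := 1 + 2*u₁*z^4 - 2*u₁^2*z^8 with hadef
    clear_value a
    -- cube root comparison
    have hra : |r - a| * 2 ≤ |r^3 - a^3| := by
      have hid : r^3 - a^3 = (r - a) * (r^2 + r*a + a^2) := by ring
      rw [hid, abs_mul]
      have hapos : (0:ℝ) < a := by linarith
      have hpos : (0:ℝ) < r^2 + r*a + a^2 :=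
        add_pos (add_pos (pow_pos hrpos 2) (mul_pos hrpos hapos)) (pow_pos hapos 2)
      have h2' : (2:ℝ) ≤ |r^2 + r*a + a^2| := by
        rw [abs_of_pos hpos]
        have hr2 : ((9:ℝ)/10)^2 ≤ r^2 := pow_le_pow_left₀ (by norm_num) hrlb 2
        have ha2 : ((9:ℝ)/10)^2 ≤ a^2 := pow_le_pow_left₀ (by norm_num) halb 2
        have hram : (9:ℝ)/10*(9/10) ≤ r*a :=
          mul_le_mul hrlb halb (by norm_num) hrpos.le
        norm_num at hr2 ha2
        linarith
      exact mul_le_mul_of_nonneg_left h2' (abs_nonneg _)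
    have hp1 : r^3 - a^3
        = z^12 * (16*u₁^3 + 12*u₁^4*z^4 - 24*u₁^5*z^8 + 8*u₁^6*z^12) := by
      rw [hr3, hadef]; ring
    have hrabound : |r - a| * 2 ≤ C₁ * z^12 := by
      calc |r - a| * 2 ≤ |r^3 - a^3| := hra
        _ = z^12 * |16*u₁^3 + 12*u₁^4*z^4 - 24*u₁^5*z^8 + 8*u₁^6*z^12| := by
            rw [hp1, abs_mul, abs_of_pos (pow_pos hzpos 12)]
        _ ≤ z^12 * C₁ := mul_le_mul_of_nonneg_left h3 (pow_pos hzpos 12).le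
        _ = C₁ * z^12 := mul_comm _ _
    -- the numerator estimate
    have hNabound : |(1 + (u₁+u₂)*z^4 - a)*r^3 - (u₂-u₁)*z^4*a^2 - 2*u₁*u₂*z^8| ≤ C₂ * z^12 := by
      have hNa : (1 + (u₁+u₂)*z^4 - a)*r^3 - (u₂-u₁)*z^4*a^2 - 2*u₁*u₂*z^8
          = z^12 * (6*u₁^3 + 6*u₁^2*u₂ + (4*u₁^4 + 8*u₁^3*u₂)*z^4 + (4*u₁^5 - 4*u₁^4*u₂)*z^8) := by
        rw [hr3, hadef]; ring
      rw [hNa, abs_mul, abs_of_pos (pow_pos hzpos 12)]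
      calc z^12 * |6*u₁^3 + 6*u₁^2*u₂ + (4*u₁^4 + 8*u₁^3*u₂)*z^4 + (4*u₁^5 - 4*u₁^4*u₂)*z^8|
          ≤ z^12 * C₂ := mul_le_mul_of_nonneg_left h4 (pow_pos hzpos 12).le
        _ = C₂ * z^12 := mul_comm _ _
    have hfac : |r^3 + (u₂-u₁)*z^4*(a+r)| ≤ 4 := by
      have hq4 : |(u₂-u₁)*z^4*(a+r)| ≤ 22/10 := by
        rw [abs_mul]
        have har : |a + r| ≤ 22/10 := by
          rw [abs_of_pos (by linarith : (0:ℝ) < a + r)]; linarith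
        calc |(u₂-u₁)*z^4| * |a+r| ≤ 1 * (22/10) :=
              mul_le_mul h5 har (abs_nonneg _) (by norm_num)
          _ = 22/10 := by norm_num
      have hr3abs : |r^3| ≤ 11/10 := by
        rw [abs_of_pos (pow_pos hrpos 3)]; exact hr3ub
      calc |r^3 + (u₂-u₁)*z^4*(a+r)| ≤ |r^3| + |(u₂-u₁)*z^4*(a+r)| := abs_add_le _ _
        _ ≤ 11/10 + 22/10 := add_le_add hr3abs hq4
        _ ≤ 4 := by norm_num
    have hNr : |(1 + (u₁+u₂)*z^4 - r)*r^3 - (u₂-u₁)*z^4*r^2 - 2*u₁*u₂*z^8|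
        ≤ (2*C₁ + C₂) * z^12 := by
      have hsplit : (1 + (u₁+u₂)*z^4 - r)*r^3 - (u₂-u₁)*z^4*r^2 - 2*u₁*u₂*z^8
          = ((1 + (u₁+u₂)*z^4 - a)*r^3 - (u₂-u₁)*z^4*a^2 - 2*u₁*u₂*z^8)
            + (a - r) * (r^3 + (u₂-u₁)*z^4*(a+r)) := by ring
      have htri : |(1 + (u₁+u₂)*z^4 - r)*r^3 - (u₂-u₁)*z^4*r^2 - 2*u₁*u₂*z^8|
          ≤ |(1 + (u₁+u₂)*z^4 - a)*r^3 - (u₂-u₁)*z^4*a^2 - 2*u₁*u₂*z^8|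
            + |(a - r) * (r^3 + (u₂-u₁)*z^4*(a+r))| := by
        rw [hsplit]; exact abs_add_le _ _
      have hm : |(a - r) * (r^3 + (u₂-u₁)*z^4*(a+r))| ≤ |a - r| * 4 := by
        rw [abs_mul]
        exact mul_le_mul_of_nonneg_left hfac (abs_nonneg _)
      have hcomm : |a - r| = |r - a| := abs_sub_comm _ _
      rw [hcomm] at hm
      linarith
    -- identify the expression
    have hcr : c = r / z^2 := by
      rw [hrdef]; field_simp
    have hτ₁3 : 3 * τ₁ z = r^3 / z^6 := by
      rw [eq_div_iff hz6.ne']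
      have : r^3 = z^6 * c^3 := by rw [hrdef]; ring
      rw [this, hc3]; ring
    have hApart : (τ₂ z - τ₁ z) / (2*(u₂-u₁)) = (1 + (u₁+u₂)*z^4) / z^2 := by
      rw [hτ₁, hτ₂]
      field_simp
      ring
    have hE : (τ₂ z - τ₁ z) / (2 * (u₂ - u₁)) - c - (u₂ - u₁) / c - 2 * u₁ * u₂ / (3 * τ₁ z)
        = ((1 + (u₁+u₂)*z^4 - r)*r^3 - (u₂-u₁)*z^4*r^2 - 2*u₁*u₂*z^8) / (z^2 * r^3) := by
      rw [hApart, hcr, hτ₁3]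
      field_simp
    rw [abs_of_pos (pow_pos hzpos 10), hE]
    have hden : (0:ℝ) < z^2 * r^3 := mul_pos hz2 (pow_pos hrpos 3)
    rw [abs_div, abs_of_pos hden, div_le_iff₀ hden]
    have hKnn : (0:ℝ) ≤ (2*C₁+C₂)*z^12 :=
      mul_nonneg (by linarith) (by positivity)
    have h2Knn : (0:ℝ) ≤ 2*(2*C₁+C₂)*z^12 :=
      mul_nonneg (mul_nonneg (by norm_num) (by linarith)) (by positivity)
    have hstep : (2*(2*C₁+C₂)*z^12)*((9:ℝ)/10) ≤ (2*(2*C₁+C₂)*z^12)*r^3 :=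
      mul_le_mul_of_nonneg_left hr3lb h2Knn
    have e : C*z^10*(z^2*r^3) = (2*(2*C₁+C₂)*z^12)*r^3 := by rw [hCdef]; ring
    rw [e]
    linarith [hNr, hstep, hKnn]
  -- second part : z^10 is O(τ₁^{-5/3})
  have hz10 : (fun z : ℝ => z ^ 10)
      =O[nhdsWithin (0 : ℝ) (Ioi 0)] (fun z : ℝ => (τ₁ z) ^ (-(5 : ℝ) / 3)) := by
    rw [isBigO_iff]
    refine ⟨1, ?_⟩
    filter_upwards [hmem, hev1] with z hz h1
    have hzpos : (0:ℝ) < z := hz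
    obtain ⟨h1a, h1b⟩ := abs_le.mp h1
    have hz6 : (0:ℝ) < z^6 := by positivity
    have hτeq : τ₁ z = (1 + (6*u₁*z^4 + 6*u₁^2*z^8)) / (3*z^6) := by
      rw [hτ₁]; field_simp; ring
    have hτpos : 0 < τ₁ z := by
      rw [hτeq]; exact div_pos (by linarith) (by positivity)
    have hτinv : z^6 ≤ (τ₁ z)⁻¹ := by
      rw [hτeq, inv_div, le_div_iff₀ (by linarith : (0:ℝ) < 1 + (6*u₁*z^4 + 6*u₁^2*z^8))]
      have hmul := mul_le_mul_of_nonneg_left h1b hz6.le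
      linarith [hmul, hz6]
    have e1 : ((z:ℝ)^6) ^ ((5:ℝ)/3) = z^10 := by
      rw [← Real.rpow_natCast z 6, ← Real.rpow_mul hzpos.le, ← Real.rpow_natCast z 10]
      norm_num
    have e2 : ((z:ℝ)^6) ^ ((5:ℝ)/3) ≤ ((τ₁ z)⁻¹) ^ ((5:ℝ)/3) :=
      Real.rpow_le_rpow (by positivity) hτinv (by norm_num)
    have e3 : ((τ₁ z)⁻¹) ^ ((5:ℝ)/3) = (τ₁ z) ^ (-(5:ℝ)/3) := by
      rw [Real.inv_rpow hτpos.le, ← Real.rpow_neg hτpos.le]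
      norm_num
    have hτ53pos : 0 < (τ₁ z) ^ (-(5:ℝ)/3) := Real.rpow_pos_of_pos hτpos _
    simp only [Real.norm_eq_abs]
    rw [abs_of_pos (pow_pos hzpos 10), abs_of_pos hτ53pos, one_mul]
    linarith [e1 ▸ e2, e3 ▸ e2]
  exact ⟨first, first.trans hz10⟩
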